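/- arXiv:2506.22782 — 3 statements merged into one kernel-verified Lean document; each statement's English description precedes it below -/
import Mathlib

section
/- Let 0 ≤ β̂ < 1, δ̂ > 0, C > 0, C₀ ≥ 0 and 0 ≤ α̂ < δ̂/2. Suppose y is a nonnegative locally integrable function on [0,∞) satisfying y(t) ≤ C₀ e^{-2α̂ t} + C ∫₀ᵗ (t-s)^{-β̂} e^{-δ̂(t-s)} y(s) ds for all t ≥ 0, and assume C < (δ̂ - 2α̂)^{1-β̂} / Γ(1-β̂). Then for all t ≥ 0: y(t) ≤ C₀ e^{-2α̂ t} · (1 + C Γ(1-β̂) / ((δ̂ - 2α̂)^{1-β̂} - C Γ(1-β̂))). -/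
open MeasureTheory Real Set

open Filter
open scoped ENNReal

noncomputable def grK (β b u : ℝ) : ℝ≥0∞ := ENNReal.ofReal (u ^ (-β) * Real.exp (-b * u))

lemma grK_meas (β b : ℝ) : Measurable (grK β b) := by
  apply ENNReal.measurable_ofReal.comp
  exact (measurable_id.pow_const _).mul (Real.continuous_exp.measurable.comp
    (measurable_const.mul measurable_id))

lemma grK_int {β b : ℝ} (hβ0 : 0 ≤ β) (hβ1 : β < 1) (hb : 0 < b) :
    ∫⁻ u in Ioi (0:ℝ), grK β b u = ENNReal.ofReal (Real.Gamma (1 - β) * b ^ (β - 1)) := by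
  have hint : IntegrableOn (fun u : ℝ => u ^ (-β) * Real.exp (-b * u)) (Ioi 0) := by
    have := integrableOn_rpow_mul_exp_neg_mul_rpow (show (-1:ℝ) < -β by linarith) one_pos hb
    simpa [Real.rpow_one] using this
  have h0 : 0 ≤ᵐ[volume.restrict (Ioi (0:ℝ))] fun u => u ^ (-β) * Real.exp (-b * u) := by
    filter_upwards [ae_restrict_mem measurableSet_Ioi] with u hu
    exact mul_nonneg (Real.rpow_nonneg (le_of_lt hu) _) (Real.exp_pos _).le
  unfold grK
  rw [← ofReal_integral_eq_lintegral_ofReal hint h0]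
  congr 1
  have h := Real.integral_rpow_mul_exp_neg_mul_Ioi (show (0:ℝ) < 1 - β by linarith) hb
  simp only [show (1:ℝ) - β - 1 = -β by ring] at h
  simp only [neg_mul]
  rw [h, one_div, ← Real.rpow_neg_one b, ← Real.rpow_mul hb.le, mul_comm]
  congr 2
  ring

lemma grShift_le (g : ℝ → ℝ≥0∞) (hg : Measurable g) (t : ℝ) :
    ∫⁻ s in Ioc 0 t, g (t - s) ≤ ∫⁻ u in Ioi (0:ℝ), g u := by
  have hpre : (fun s : ℝ => t - s) ⁻¹' (Ico 0 t) = Ioc 0 t := by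
    ext s
    simp only [mem_preimage, mem_Ico, mem_Ioc, sub_nonneg, sub_lt_self_iff]
    tauto
  calc ∫⁻ s in Ioc 0 t, g (t - s) = ∫⁻ u in Ico 0 t, g u := by
        rw [← hpre]
        exact (Measure.measurePreserving_sub_left volume t).setLIntegral_comp_preimage
          measurableSet_Ico hg
    _ ≤ ∫⁻ u in Ioi 0, g u := by
        rw [← Measure.restrict_congr_set Ioo_ae_eq_Ico]
        exact lintegral_mono_set Ioo_subset_Ioi_self

lemma grShift2 (g : ℝ → ℝ≥0∞) (hg : Measurable g) (s : ℝ) :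
    ∫⁻ t in Ici s, g (t - s) = ∫⁻ u in Ioi (0:ℝ), g u := by
  have hpre : (fun u : ℝ => u + s) ⁻¹' (Ici s) = Ici 0 := by
    ext u; simp [le_add_iff_nonneg_left]
  have h := (measurePreserving_add_right volume s).setLIntegral_comp_preimage
    (s := Ici s) measurableSet_Ici (f := fun t => g (t - s))
    (hg.comp (measurable_id.sub measurable_const))
  rw [hpre] at h
  rw [← h, ← Measure.restrict_congr_set Ioi_ae_eq_Ici]
  simp

/-- Exponential-decay form of the convolution Grönwall inequality: if
`y(t) ≤ C₀ e^{-2α̂t} + C (Q_{β̂,δ̂} * y)(t)` for all `t ≥ 0` and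
`C < (δ̂-2α̂)^{1-β̂}/Γ(1-β̂)`, then
`y(t) ≤ C₀ e^{-2α̂t} (1 + CΓ(1-β̂)/((δ̂-2α̂)^{1-β̂} - CΓ(1-β̂)))`. -/
theorem gronwall_tempered_kernel_exp_decay
    (β δ C C₀ α : ℝ) (hβ0 : 0 ≤ β) (hβ1 : β < 1) (hδ : 0 < δ) (hC : 0 < C)
    (hC₀ : 0 ≤ C₀) (hα0 : 0 ≤ α) (hα : α < δ / 2)
    (y : ℝ → ℝ)
    (hy_nonneg : ∀ t, 0 ≤ t → 0 ≤ y t)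
    (hy_loc : LocallyIntegrableOn y (Ici (0:ℝ)))
    (hineq : ∀ t, 0 ≤ t →
      y t ≤ C₀ * Real.exp (-2 * α * t) + C * ∫ s in Ioc (0:ℝ) t,
        (t - s) ^ (-β) * Real.exp (-δ * (t - s)) * y s)
    (hsmall : C < (δ - 2 * α) ^ (1 - β) / Real.Gamma (1 - β)) :
    ∀ t, 0 ≤ t →
      y t ≤ C₀ * Real.exp (-2 * α * t) *
        (1 + C * Real.Gamma (1 - β) /
          ((δ - 2 * α) ^ (1 - β) - C * Real.Gamma (1 - β))) := by
  intro t₀ ht₀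
  have hΓpos : 0 < Real.Gamma (1 - β) := Real.Gamma_pos_of_pos (by linarith)
  have hlam : 0 < δ - 2 * α := by linarith
  have hκpos : (0:ℝ) < (δ - 2 * α) ^ (1 - β) := Real.rpow_pos_of_pos hlam _
  have hCΓ : C * Real.Gamma (1 - β) < (δ - 2 * α) ^ (1 - β) :=
    (lt_div_iff₀ hΓpos).mp hsmall
  set ρ : ℝ := C * (Real.Gamma (1 - β) * (δ - 2 * α) ^ (β - 1)) with hρ
  have hlaminv : (δ - 2 * α) ^ (β - 1) = ((δ - 2 * α) ^ (1 - β))⁻¹ := by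
    rw [show β - 1 = -(1 - β) by ring, Real.rpow_neg hlam.le]
  have hρ_eq : ρ = C * Real.Gamma (1 - β) / (δ - 2 * α) ^ (1 - β) := by
    rw [hρ, hlaminv]; ring
  have hρ1 : ρ < 1 := by rw [hρ_eq, div_lt_one hκpos]; exact hCΓ
  have hρ0 : 0 ≤ ρ := by
    rw [hρ_eq]; positivity
  have h1ρ : 0 < 1 - ρ := by linarith
  set M : ℝ := C₀ / (1 - ρ) with hM
  have hM0 : 0 ≤ M := div_nonneg hC₀ h1ρ.le
  have hC₀M : C₀ + ρ * M = M := by rw [hM]; field_simp; ring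
  have hMC₀ : C₀ ≤ M := by
    nlinarith [mul_nonneg hρ0 hM0]
  -- the δ-kernel contraction constant
  set rδ : ℝ := C * (Real.Gamma (1 - β) * δ ^ (β - 1)) with hrδ
  have hrδ0 : 0 ≤ rδ := by
    have : (0:ℝ) ≤ δ ^ (β - 1) := Real.rpow_nonneg hδ.le _
    rw [hrδ]; positivity
  have hrδ1 : rδ < 1 := by
    have h1 : (δ - 2 * α) ^ (1 - β) ≤ δ ^ (1 - β) :=
      Real.rpow_le_rpow hlam.le (by linarith) (by linarith)
    have h3 : δ ^ (1 - β) * δ ^ (β - 1) = 1 := by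
      rw [← Real.rpow_add hδ]; norm_num
    have h4 : (0:ℝ) < δ ^ (β - 1) := Real.rpow_pos_of_pos hδ _
    calc rδ = C * Real.Gamma (1 - β) * δ ^ (β - 1) := by rw [hrδ]; ring
      _ < δ ^ (1 - β) * δ ^ (β - 1) :=
        mul_lt_mul_of_pos_right (lt_of_lt_of_le hCΓ h1) h4
      _ = 1 := h3
  -- measurable modification of y
  have hmeas := hy_loc.aestronglyMeasurable
  set y' : ℝ → ℝ := hmeas.mk y with hy'
  have hy'meas : Measurable y' := hmeas.stronglyMeasurable_mk.measurable
  have hyy' : y =ᵐ[volume.restrict (Ici (0:ℝ))] y' := hmeas.ae_eq_mk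
  set F : ℝ → ℝ≥0∞ := fun s => ENNReal.ofReal (y' s) with hF
  have hFmeas : Measurable F := ENNReal.measurable_ofReal.comp hy'meas
  have hae : ∀ t : ℝ, (fun s => ENNReal.ofReal (y s)) =ᵐ[volume.restrict (Ioc (0:ℝ) t)] F := by
    intro t
    have hsub : Ioc (0:ℝ) t ⊆ Ici (0:ℝ) := fun s hs => le_of_lt hs.1
    filter_upwards [ae_restrict_of_ae_restrict_of_subset hsub hyy'] with s hs
    rw [hF, hs]
  -- the operator
  set Op : (ℝ → ℝ≥0∞) → ℝ → ℝ≥0∞ :=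
    fun f t => ENNReal.ofReal C * ∫⁻ s in Ioc 0 t, grK β δ (t - s) * f s with hOp
  set S : Set (ℝ × ℝ) := {p : ℝ × ℝ | 0 < p.2 ∧ p.2 ≤ p.1} with hS
  have hSmeas : MeasurableSet S :=
    (measurableSet_lt measurable_const measurable_snd).inter
      (measurableSet_le measurable_snd measurable_fst)
  have hOp_ind : ∀ f : ℝ → ℝ≥0∞, ∀ t : ℝ,
      Op f t = ENNReal.ofReal C *
        ∫⁻ s, (S.indicator (fun p : ℝ × ℝ => grK β δ (p.1 - p.2) * f p.2)) (t, s) := by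
    intro f t
    simp only [hOp]
    congr 1
    rw [← lintegral_indicator measurableSet_Ioc]
    refine lintegral_congr fun s => ?_
    by_cases h : s ∈ Ioc 0 t
    · rw [Set.indicator_of_mem h, Set.indicator_of_mem (by exact h)]
    · rw [Set.indicator_of_notMem h, Set.indicator_of_notMem (by exact h)]
  have hOpMeas : ∀ f : ℝ → ℝ≥0∞, Measurable f → Measurable (Op f) := by
    intro f hf
    have hGm : Measurable (S.indicator (fun p : ℝ × ℝ => grK β δ (p.1 - p.2) * f p.2)) :=
      Measurable.indicator
        (((grK_meas β δ).comp (measurable_fst.sub measurable_snd)).mul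
          (hf.comp measurable_snd)) hSmeas
    simp only [funext (hOp_ind f)]
    exact measurable_const.mul hGm.lintegral_prod_right'
  -- hypothesis in ENNReal form
  have hH : ∀ t : ℝ, 0 ≤ t →
      ENNReal.ofReal (y t) ≤ ENNReal.ofReal (C₀ * Real.exp (-2 * α * t)) + Op F t := by
    intro t ht
    by_cases hL : (∫⁻ s in Ioc (0:ℝ) t, grK β δ (t - s) * F s) = ∞
    · have : Op F t = ∞ := by
        simp only [hOp, hL, ENNReal.mul_top
          (by simp [ENNReal.ofReal_eq_zero, not_le, hC] : ENNReal.ofReal C ≠ 0)]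
      rw [this]
      simp
    · have hker_nonneg : ∀ᵐ s ∂(volume.restrict (Ioc (0:ℝ) t)),
          0 ≤ (t - s) ^ (-β) * Real.exp (-δ * (t - s)) := by
        filter_upwards [ae_restrict_mem measurableSet_Ioc] with s hs
        exact mul_nonneg (Real.rpow_nonneg (by linarith [hs.2]) _) (Real.exp_pos _).le
      have hy_ae_nonneg : ∀ᵐ s ∂(volume.restrict (Ioc (0:ℝ) t)), 0 ≤ y s := by
        filter_upwards [ae_restrict_mem measurableSet_Ioc] with s hs
        exact hy_nonneg s hs.1.le
      have hL_eq : (∫⁻ s in Ioc (0:ℝ) t, grK β δ (t - s) * F s)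
          = ∫⁻ s in Ioc (0:ℝ) t,
              ENNReal.ofReal ((t - s) ^ (-β) * Real.exp (-δ * (t - s)) * y s) := by
        refine lintegral_congr_ae ?_
        filter_upwards [hae t, hker_nonneg] with s hs hk
        rw [ENNReal.ofReal_mul hk, hs, grK]
      have hnonneg : 0 ≤ᵐ[volume.restrict (Ioc (0:ℝ) t)]
          fun s => (t - s) ^ (-β) * Real.exp (-δ * (t - s)) * y s := by
        filter_upwards [hker_nonneg, hy_ae_nonneg] with s h1 h2
        exact mul_nonneg h1 h2
      have hsub : Ioc (0:ℝ) t ⊆ Ici (0:ℝ) := fun s hs => le_of_lt hs.1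
      have hint : IntegrableOn
          (fun s => (t - s) ^ (-β) * Real.exp (-δ * (t - s)) * y s) (Ioc 0 t) := by
        constructor
        · refine AEStronglyMeasurable.mul ?_ (hmeas.mono_measure (Measure.restrict_mono hsub le_rfl))
          exact (((measurable_const.sub measurable_id).pow_const _).mul
            (Real.continuous_exp.measurable.comp
              (measurable_const.mul (measurable_const.sub measurable_id)))).aestronglyMeasurable
        · rw [hasFiniteIntegral_iff_ofReal hnonneg]
          rw [← hL_eq]
          exact lt_top_iff_ne_top.mpr hL
      have hInt_nonneg : 0 ≤ ∫ s in Ioc (0:ℝ) t,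
          (t - s) ^ (-β) * Real.exp (-δ * (t - s)) * y s :=
        integral_nonneg_of_ae hnonneg
      have h1 : ENNReal.ofReal (∫ s in Ioc (0:ℝ) t,
            (t - s) ^ (-β) * Real.exp (-δ * (t - s)) * y s)
          = ∫⁻ s in Ioc (0:ℝ) t, grK β δ (t - s) * F s :=
        (ofReal_integral_eq_lintegral_ofReal hint hnonneg).trans hL_eq.symm
      calc ENNReal.ofReal (y t)
          ≤ ENNReal.ofReal (C₀ * Real.exp (-2 * α * t) + C * ∫ s in Ioc (0:ℝ) t,
              (t - s) ^ (-β) * Real.exp (-δ * (t - s)) * y s) :=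
            ENNReal.ofReal_le_ofReal (hineq t ht)
        _ = ENNReal.ofReal (C₀ * Real.exp (-2 * α * t)) +
            ENNReal.ofReal C * ENNReal.ofReal (∫ s in Ioc (0:ℝ) t,
              (t - s) ^ (-β) * Real.exp (-δ * (t - s)) * y s) := by
            rw [ENNReal.ofReal_add (by positivity) (mul_nonneg hC.le hInt_nonneg),
              ENNReal.ofReal_mul hC.le]
        _ = ENNReal.ofReal (C₀ * Real.exp (-2 * α * t)) + Op F t := by
            rw [h1, hOp]
  have hOpMono : ∀ f g : ℝ → ℝ≥0∞, ∀ t : ℝ,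
      (f ≤ᵐ[volume.restrict (Ioc (0:ℝ) t)] g) → Op f t ≤ Op g t := by
    intro f g t h
    simp only [hOp]
    refine mul_le_mul_right (lintegral_mono_ae ?_) _
    filter_upwards [h] with s hs
    exact mul_le_mul_right hs _
  have hOpExp : ∀ D : ℝ, 0 ≤ D → ∀ t : ℝ, 0 ≤ t →
      Op (fun s => ENNReal.ofReal (D * Real.exp (-2 * α * s))) t ≤
        ENNReal.ofReal (ρ * D * Real.exp (-2 * α * t)) := by
    intro D hD t ht
    have hptw : ∀ᵐ s ∂(volume.restrict (Ioc (0:ℝ) t)),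
        grK β δ (t - s) * ENNReal.ofReal (D * Real.exp (-2 * α * s)) =
        ENNReal.ofReal (D * Real.exp (-2 * α * t)) * grK β (δ - 2 * α) (t - s) := by
      filter_upwards [ae_restrict_mem measurableSet_Ioc] with s hs
      have hts : (0:ℝ) ≤ t - s := by linarith [hs.2]
      rw [grK, grK,
        ← ENNReal.ofReal_mul (mul_nonneg (Real.rpow_nonneg hts _) (Real.exp_pos _).le),
        ← ENNReal.ofReal_mul (mul_nonneg hD (Real.exp_pos _).le)]
      congr 1
      have hexp : Real.exp (-δ * (t - s)) * Real.exp (-2 * α * s) =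
          Real.exp (-2 * α * t) * Real.exp (-(δ - 2 * α) * (t - s)) := by
        rw [← Real.exp_add, ← Real.exp_add]
        congr 1
        ring
      linear_combination ((t - s) ^ (-β) * D) * hexp
    simp only [hOp]
    calc ENNReal.ofReal C * ∫⁻ s in Ioc (0:ℝ) t,
          grK β δ (t - s) * ENNReal.ofReal (D * Real.exp (-2 * α * s))
        = ENNReal.ofReal C * ∫⁻ s in Ioc (0:ℝ) t,
          ENNReal.ofReal (D * Real.exp (-2 * α * t)) * grK β (δ - 2 * α) (t - s) := by
          rw [lintegral_congr_ae hptw]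
      _ = ENNReal.ofReal C * (ENNReal.ofReal (D * Real.exp (-2 * α * t)) *
            ∫⁻ s in Ioc (0:ℝ) t, grK β (δ - 2 * α) (t - s)) := by
          rw [lintegral_const_mul' _ _ ENNReal.ofReal_ne_top]
      _ ≤ ENNReal.ofReal C * (ENNReal.ofReal (D * Real.exp (-2 * α * t)) *
            ENNReal.ofReal (Real.Gamma (1 - β) * (δ - 2 * α) ^ (β - 1))) := by
          gcongr
          exact (grShift_le _ (grK_meas β (δ - 2 * α)) t).trans_eq (grK_int hβ0 hβ1 hlam)
      _ = ENNReal.ofReal (ρ * D * Real.exp (-2 * α * t)) := by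
          rw [← ENNReal.ofReal_mul (by positivity), ← ENNReal.ofReal_mul hC.le]
          congr 1
          rw [hρ]
          ring
  set Φ : ℕ → ℝ → ℝ≥0∞ := fun n => Op^[n] F with hΦ
  have hΦ0 : Φ 0 = F := rfl
  have hΦsucc : ∀ n, Φ (n + 1) = Op (Φ n) := by
    intro n
    simp only [hΦ, Function.iterate_succ_apply']
  have hΦmeas : ∀ n, Measurable (Φ n) := by
    intro n
    induction n with
    | zero => exact hFmeas
    | succ n ih => rw [hΦsucc]; exact hOpMeas _ ih
  -- main iteration bound
  have hQ : ∀ n, ∀ t : ℝ, 0 ≤ t →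
      ENNReal.ofReal (y t) ≤ ENNReal.ofReal (M * Real.exp (-2 * α * t)) + Φ (n + 1) t := by
    intro n
    induction n with
    | zero =>
      intro t ht
      refine (hH t ht).trans ?_
      rw [hΦsucc 0, hΦ0]
      exact add_le_add_left (ENNReal.ofReal_le_ofReal
        (mul_le_mul_of_nonneg_right hMC₀ (Real.exp_pos _).le)) _
    | succ n ih =>
      intro t ht
      refine (hH t ht).trans ?_
      have hFae : F ≤ᵐ[volume.restrict (Ioc (0:ℝ) t)]
          fun s => ENNReal.ofReal (M * Real.exp (-2 * α * s)) + Φ (n + 1) s := by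
        filter_upwards [hae t, ae_restrict_mem measurableSet_Ioc] with s hs hs'
        rw [← hs]
        exact ih s hs'.1.le
      have h3 : Op (fun s => ENNReal.ofReal (M * Real.exp (-2 * α * s)) + Φ (n + 1) s) t
          = Op (fun s => ENNReal.ofReal (M * Real.exp (-2 * α * s))) t + Op (Φ (n + 1)) t := by
        have hm1 : Measurable fun s : ℝ =>
            grK β δ (t - s) * ENNReal.ofReal (M * Real.exp (-2 * α * s)) := by
          refine ((grK_meas β δ).comp (measurable_const.sub measurable_id)).mul ?_
          exact ENNReal.measurable_ofReal.comp
            (measurable_const.mul (Real.continuous_exp.measurable.comp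
              ((measurable_const.mul measurable_id))))
        simp only [hOp, mul_add]
        rw [lintegral_add_left hm1, mul_add]
      calc ENNReal.ofReal (C₀ * Real.exp (-2 * α * t)) + Op F t
          ≤ ENNReal.ofReal (C₀ * Real.exp (-2 * α * t)) +
            (ENNReal.ofReal (ρ * M * Real.exp (-2 * α * t)) + Op (Φ (n + 1)) t) := by
            gcongr
            refine (hOpMono _ _ t hFae).trans ?_
            rw [h3]
            gcongr
            exact hOpExp M hM0 t ht
        _ ≤ ENNReal.ofReal (M * Real.exp (-2 * α * t)) + Φ (n + 2) t := by
            rw [← add_assoc, ← ENNReal.ofReal_add (by positivity) (by positivity),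
              hΦsucc (n + 1)]
            refine add_le_add_left (ENNReal.ofReal_le_ofReal (le_of_eq ?_)) _
            linear_combination (Real.exp (-2 * α * t)) * hC₀M
  -- contraction of integrals on (0, t₀]
  set m : ℕ → ℝ≥0∞ := fun n => ∫⁻ s in Ioc (0:ℝ) t₀, Φ n s with hm
  have hm0 : m 0 < ∞ := by
    have hIcc : IntegrableOn y (Icc (0:ℝ) t₀) :=
      hy_loc.integrableOn_compact_subset Icc_subset_Ici_self isCompact_Icc
    have hInt : IntegrableOn y (Ioc (0:ℝ) t₀) := hIcc.mono_set Ioc_subset_Icc_self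
    have : m 0 = ∫⁻ s in Ioc (0:ℝ) t₀, ENNReal.ofReal (y s) := by
      rw [hm]
      exact lintegral_congr_ae (hae t₀).symm
    rw [this]
    exact hInt.setLIntegral_lt_top
  have hinner : ∀ n : ℕ, ∀ s : ℝ,
      (∫⁻ t in Ioc (0:ℝ) t₀, (S.indicator (fun p : ℝ × ℝ => grK β δ (p.1 - p.2) * Φ n p.2)) (t, s))
        ≤ (Ioc (0:ℝ) t₀).indicator
            (fun s => ENNReal.ofReal (Real.Gamma (1 - β) * δ ^ (β - 1)) * Φ n s) s := by
    intro n s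
    by_cases hs : s ∈ Ioc (0:ℝ) t₀
    · rw [Set.indicator_of_mem hs]
      have hb : ∀ t : ℝ, (S.indicator (fun p : ℝ × ℝ => grK β δ (p.1 - p.2) * Φ n p.2)) (t, s)
          ≤ (Ici s).indicator (fun t => Φ n s * grK β δ (t - s)) t := by
        intro t
        by_cases hts : (t, s) ∈ S
        · rw [Set.indicator_of_mem hts, Set.indicator_of_mem (mem_Ici.mpr hts.2), mul_comm]
        · rw [Set.indicator_of_notMem hts]
          exact zero_le
      calc (∫⁻ t in Ioc (0:ℝ) t₀,
            (S.indicator (fun p : ℝ × ℝ => grK β δ (p.1 - p.2) * Φ n p.2)) (t, s))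
          ≤ ∫⁻ t in Ioc (0:ℝ) t₀, (Ici s).indicator (fun t => Φ n s * grK β δ (t - s)) t :=
            lintegral_mono (hb ·)
        _ ≤ ∫⁻ t, (Ici s).indicator (fun t => Φ n s * grK β δ (t - s)) t :=
            lintegral_mono' Measure.restrict_le_self le_rfl
        _ = ∫⁻ t in Ici s, Φ n s * grK β δ (t - s) := lintegral_indicator measurableSet_Ici _
        _ = Φ n s * ∫⁻ t in Ici s, grK β δ (t - s) :=
            lintegral_const_mul _ ((grK_meas β δ).comp (measurable_id.sub measurable_const))
        _ = Φ n s * ∫⁻ u in Ioi (0:ℝ), grK β δ u := by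
            rw [grShift2 _ (grK_meas β δ) s]
        _ = ENNReal.ofReal (Real.Gamma (1 - β) * δ ^ (β - 1)) * Φ n s := by
            rw [grK_int hβ0 hβ1 hδ, mul_comm]
    · rw [Set.indicator_of_notMem hs]
      have hz : ∀ t ∈ Ioc (0:ℝ) t₀,
          (S.indicator (fun p : ℝ × ℝ => grK β δ (p.1 - p.2) * Φ n p.2)) (t, s) = 0 := by
        intro t ht
        refine Set.indicator_of_notMem ?_ _
        rintro ⟨h1, h2⟩
        exact hs ⟨h1, h2.trans ht.2⟩
      rw [setLIntegral_congr_fun measurableSet_Ioc hz, lintegral_zero]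
  have hmrec : ∀ n, m (n + 1) ≤ ENNReal.ofReal rδ * m n := by
    intro n
    have hGm : Measurable fun p : ℝ × ℝ =>
        (S.indicator (fun p : ℝ × ℝ => grK β δ (p.1 - p.2) * Φ n p.2)) p :=
      Measurable.indicator
        (((grK_meas β δ).comp (measurable_fst.sub measurable_snd)).mul
          ((hΦmeas n).comp measurable_snd)) hSmeas
    calc m (n + 1) = ∫⁻ t in Ioc (0:ℝ) t₀, ENNReal.ofReal C *
          ∫⁻ s, (S.indicator (fun p : ℝ × ℝ => grK β δ (p.1 - p.2) * Φ n p.2)) (t, s) := by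
          simp only [hm]
          rw [hΦsucc n]
          exact lintegral_congr fun t => hOp_ind (Φ n) t
      _ = ENNReal.ofReal C * ∫⁻ t in Ioc (0:ℝ) t₀,
          ∫⁻ s, (S.indicator (fun p : ℝ × ℝ => grK β δ (p.1 - p.2) * Φ n p.2)) (t, s) :=
          lintegral_const_mul' _ _ ENNReal.ofReal_ne_top
      _ = ENNReal.ofReal C * ∫⁻ s, ∫⁻ t in Ioc (0:ℝ) t₀,
          (S.indicator (fun p : ℝ × ℝ => grK β δ (p.1 - p.2) * Φ n p.2)) (t, s) := by
          rw [lintegral_lintegral_swap hGm.aemeasurable]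
      _ ≤ ENNReal.ofReal C * ∫⁻ s, (Ioc (0:ℝ) t₀).indicator
            (fun s => ENNReal.ofReal (Real.Gamma (1 - β) * δ ^ (β - 1)) * Φ n s) s := by
          exact mul_le_mul_right (lintegral_mono (hinner n)) _
      _ = ENNReal.ofReal C * ∫⁻ s in Ioc (0:ℝ) t₀,
            ENNReal.ofReal (Real.Gamma (1 - β) * δ ^ (β - 1)) * Φ n s := by
          rw [lintegral_indicator measurableSet_Ioc]
      _ = ENNReal.ofReal rδ * m n := by
          simp only [hm]
          rw [lintegral_const_mul' _ _ ENNReal.ofReal_ne_top, ← mul_assoc,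
            ← ENNReal.ofReal_mul hC.le, hrδ]
  have hmpow : ∀ n, m n ≤ (ENNReal.ofReal rδ) ^ n * m 0 := by
    intro n
    induction n with
    | zero => simp
    | succ n ih =>
      calc m (n + 1) ≤ ENNReal.ofReal rδ * m n := hmrec n
        _ ≤ ENNReal.ofReal rδ * ((ENNReal.ofReal rδ) ^ n * m 0) := mul_le_mul_right ih _
        _ = (ENNReal.ofReal rδ) ^ (n + 1) * m 0 := by ring
  have htend : Filter.Tendsto (fun n => (ENNReal.ofReal rδ) ^ n * m 0)
      Filter.atTop (nhds 0) := by
    have h1 : ENNReal.ofReal rδ < 1 := by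
      rw [show (1:ℝ≥0∞) = ENNReal.ofReal 1 by simp]
      exact ENNReal.ofReal_lt_ofReal_iff_of_nonneg hrδ0 |>.mpr hrδ1
    have h2 := ENNReal.tendsto_pow_atTop_nhds_zero_of_lt_one h1
    simpa using ENNReal.Tendsto.mul_const h2 (Or.inr hm0.ne)
  have hliminf0 : Filter.liminf m Filter.atTop = 0 := by
    refine le_antisymm ?_ zero_le
    calc Filter.liminf m Filter.atTop
        ≤ Filter.liminf (fun n => (ENNReal.ofReal rδ) ^ n * m 0) Filter.atTop :=
          Filter.liminf_le_liminf (Filter.Eventually.of_forall hmpow)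
      _ = 0 := htend.liminf_eq
  have hlimae : ∀ᵐ s ∂(volume.restrict (Ioc (0:ℝ) t₀)),
      Filter.liminf (fun n => Φ n s) Filter.atTop = 0 := by
    have hfatou : ∫⁻ s in Ioc (0:ℝ) t₀, Filter.liminf (fun n => Φ n s) Filter.atTop = 0 := by
      refine le_antisymm ?_ zero_le
      calc ∫⁻ s in Ioc (0:ℝ) t₀, Filter.liminf (fun n => Φ n s) Filter.atTop
          ≤ Filter.liminf m Filter.atTop := by
            have := lintegral_liminf_le (μ := volume.restrict (Ioc (0:ℝ) t₀)) (u := Filter.atTop) hΦmeas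
            exact this
        _ = 0 := hliminf0
    have hmeasliminf : Measurable fun s => Filter.liminf (fun n => Φ n s) Filter.atTop :=
      Measurable.liminf hΦmeas
    exact (lintegral_eq_zero_iff hmeasliminf).mp hfatou
  have haebound : F ≤ᵐ[volume.restrict (Ioc (0:ℝ) t₀)]
      fun s => ENNReal.ofReal (M * Real.exp (-2 * α * s)) := by
    filter_upwards [hlimae, hae t₀, ae_restrict_mem measurableSet_Ioc] with s h0 hsF hs
    rw [← hsF]
    refine ENNReal.le_of_forall_pos_le_add ?_
    intro ε hε _
    have hfreq : ∃ᶠ n in Filter.atTop, Φ n s < (ε : ℝ≥0∞) := by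
      have hlt : Filter.liminf (fun n => Φ n s) Filter.atTop < (ε : ℝ≥0∞) := by
        rw [h0]
        exact ENNReal.coe_pos.mpr hε
      exact Filter.frequently_lt_of_liminf_lt (by isBoundedDefault) hlt
    obtain ⟨n, hn, hn1⟩ := (hfreq.and_eventually (Filter.eventually_ge_atTop 1)).exists
    obtain ⟨k, rfl⟩ : ∃ k, n = k + 1 := ⟨n - 1, by omega⟩
    calc ENNReal.ofReal (y s)
        ≤ ENNReal.ofReal (M * Real.exp (-2 * α * s)) + Φ (k + 1) s := hQ k s hs.1.le
      _ ≤ ENNReal.ofReal (M * Real.exp (-2 * α * s)) + ε := add_le_add_right hn.le _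
  have hfinal : ENNReal.ofReal (y t₀) ≤ ENNReal.ofReal (M * Real.exp (-2 * α * t₀)) := by
    refine (hH t₀ ht₀).trans ?_
    have h2 : Op F t₀ ≤ ENNReal.ofReal (ρ * M * Real.exp (-2 * α * t₀)) :=
      (hOpMono _ _ t₀ haebound).trans (hOpExp M hM0 t₀ ht₀)
    calc ENNReal.ofReal (C₀ * Real.exp (-2 * α * t₀)) + Op F t₀
        ≤ ENNReal.ofReal (C₀ * Real.exp (-2 * α * t₀)) +
          ENNReal.ofReal (ρ * M * Real.exp (-2 * α * t₀)) := add_le_add_right h2 _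
      _ = ENNReal.ofReal (C₀ * Real.exp (-2 * α * t₀) + ρ * M * Real.exp (-2 * α * t₀)) :=
          (ENNReal.ofReal_add (by positivity) (by positivity)).symm
      _ ≤ ENNReal.ofReal (M * Real.exp (-2 * α * t₀)) :=
          ENNReal.ofReal_le_ofReal
            (le_of_eq (by linear_combination (Real.exp (-2 * α * t₀)) * hC₀M))
  have hreal : y t₀ ≤ M * Real.exp (-2 * α * t₀) :=
    (ENNReal.ofReal_le_ofReal_iff (by positivity)).mp hfinal
  refine hreal.trans ?_
  have hMeq : M = C₀ * (1 + C * Real.Gamma (1 - β) /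
      ((δ - 2 * α) ^ (1 - β) - C * Real.Gamma (1 - β))) := by
    rw [hM, hρ_eq]
    have hden : (δ - 2 * α) ^ (1 - β) - C * Real.Gamma (1 - β) ≠ 0 := ne_of_gt (by linarith)
    have hκ : (δ - 2 * α) ^ (1 - β) ≠ 0 := ne_of_gt hκpos
    field_simp
    ring
  rw [hMeq]
  exact le_of_eq (by ring)
end

section
/- Let 0 ≤ β < 1, δ > 0 and 0 ≤ α < δ/2, and let T > 0. For all nonnegative measurable functions f, g on [0,T] with ∫₀^T e^{2αs} f(s)² ds < ∞ and ∫₀^T e^{2αs} g(s)² ds < ∞, the following bilinear estimate holds: ( ∫₀^T e^{2αs} (Q_{β,δ} * f)(s) · g(s) ds )² ≤ (Γ(1-β)² / [δ(δ-2α)]^{1-β}) · ( ∫₀^T e^{2αs} f(s)² ds ) · ( ∫₀^T e^{2αs} g(s)² ds ). -/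
open MeasureTheory Real Set
open scoped ENNReal NNReal

namespace WBCE

noncomputable def Phi (β c t : ℝ) : ℝ≥0∞ := ENNReal.ofReal (t ^ (-β) * Real.exp (-c * t))

lemma phi_meas (β c : ℝ) : Measurable (Phi β c) := by
  apply Measurable.ennreal_ofReal
  fun_prop

lemma K_eq {β c : ℝ} (hβ1 : β < 1) (hc : 0 < c) :
    ∫⁻ t in Ici (0:ℝ), Phi β c t
      = ENNReal.ofReal ((1/c) ^ (1-β) * Real.Gamma (1-β)) := by
  rw [setLIntegral_congr Ioi_ae_eq_Ici.symm]
  have hInt : IntegrableOn (fun t : ℝ => t ^ (-β) * Real.exp (-c * t)) (Ioi 0) := by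
    have h := integrableOn_rpow_mul_exp_neg_mul_rpow (p := 1) (s := -β) (b := c)
      (by linarith) one_pos hc
    refine h.congr_fun (fun x hx => ?_) measurableSet_Ioi
    norm_num [Real.rpow_one]
  have hnn : 0 ≤ᵐ[volume.restrict (Ioi (0:ℝ))]
      (fun t : ℝ => t ^ (-β) * Real.exp (-c * t)) := by
    refine (ae_restrict_iff' measurableSet_Ioi).2 (Filter.Eventually.of_forall fun x hx => ?_)
    exact mul_nonneg (Real.rpow_nonneg (le_of_lt hx) _) (Real.exp_pos _).le
  rw [show ∫⁻ t in Ioi (0:ℝ), Phi β c t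
      = ∫⁻ t in Ioi (0:ℝ), ENNReal.ofReal (t ^ (-β) * Real.exp (-c * t)) from rfl,
    ← ofReal_integral_eq_lintegral_ofReal hInt hnn]
  congr 1
  have h2 := Real.integral_rpow_mul_exp_neg_mul_Ioi (a := 1-β) (r := c) (by linarith) hc
  rw [show (1:ℝ) - β - 1 = -β by ring] at h2
  rw [← h2]
  refine setIntegral_congr_fun measurableSet_Ioi fun x hx => ?_
  rw [neg_mul]

lemma bound_sub_left (β c s : ℝ) :
    ∫⁻ r in Ioc 0 s, Phi β c (s - r) ≤ ∫⁻ t in Ici (0:ℝ), Phi β c t := by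
  have hemb : MeasurableEmbedding (fun r : ℝ => s - r) :=
    (MeasurableEquiv.subLeft s).measurableEmbedding
  have hmp : MeasurePreserving (fun r : ℝ => s - r) volume volume := by
    have h := (measurePreserving_add_left (volume : Measure ℝ) s).comp
      (Measure.measurePreserving_neg (volume : Measure ℝ))
    simpa [Function.comp_def, sub_eq_add_neg] using h
  rw [← hmp.setLIntegral_comp_preimage_emb hemb (Phi β c) (Ici 0)]
  refine lintegral_mono_set fun r hr => ?_
  simp only [mem_preimage, mem_Ici, sub_nonneg]
  exact hr.2

lemma bound_sub_right (β c r T : ℝ) :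
    ∫⁻ s in Icc r T, Phi β c (s - r) ≤ ∫⁻ t in Ici (0:ℝ), Phi β c t := by
  have hemb : MeasurableEmbedding (fun s : ℝ => s - r) :=
    (MeasurableEquiv.subRight r).measurableEmbedding
  have hmp : MeasurePreserving (fun s : ℝ => s - r) volume volume :=
    measurePreserving_sub_right volume r
  rw [← hmp.setLIntegral_comp_preimage_emb hemb (Phi β c) (Ici 0)]
  refine lintegral_mono_set fun s hs => ?_
  simp only [mem_preimage, mem_Ici, sub_nonneg]
  exact hs.1

lemma lintegral_CS {X : Type*} [MeasurableSpace X] (μ : Measure X)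
    {F G : X → ℝ≥0∞} (hF : AEMeasurable F μ) (hG : AEMeasurable G μ) :
    (∫⁻ x, F x * G x ∂μ) ^ 2 ≤ (∫⁻ x, F x ^ 2 ∂μ) * (∫⁻ x, G x ^ 2 ∂μ) := by
  have hpq : Real.HolderConjugate 2 2 := Real.HolderConjugate.two_two
  have h := ENNReal.lintegral_mul_le_Lp_mul_Lq μ hpq hF hG
  have hsq : ∀ x : ℝ≥0∞, (x ^ (1/2 : ℝ)) ^ 2 = x := fun x => by
    rw [← ENNReal.rpow_natCast (x ^ (1/2 : ℝ)) 2, ← ENNReal.rpow_mul]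
    norm_num
  calc (∫⁻ x, F x * G x ∂μ) ^ 2
      = (∫⁻ x, (F * G) x ∂μ) ^ 2 := rfl
    _ ≤ ((∫⁻ x, F x ^ (2:ℝ) ∂μ) ^ (1/(2:ℝ)) * (∫⁻ x, G x ^ (2:ℝ) ∂μ) ^ (1/(2:ℝ))) ^ 2 := by
        gcongr
    _ = (∫⁻ x, F x ^ 2 ∂μ) * (∫⁻ x, G x ^ 2 ∂μ) := by
        rw [mul_pow, hsq, hsq]
        congr 1 <;> · refine lintegral_congr fun x => ?_
                      rw [← ENNReal.rpow_natCast _ 2]; norm_num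

lemma meas_conv {β c : ℝ} {ψ : ℝ → ℝ≥0∞} (hψ : Measurable ψ) :
    Measurable (fun s => ∫⁻ r in Ioc (0:ℝ) s, Phi β c (s - r) * ψ r) := by
  have hset : MeasurableSet {p : ℝ × ℝ | 0 < p.2 ∧ p.2 ≤ p.1} :=
    (measurableSet_lt measurable_const measurable_snd).inter
      (measurableSet_le measurable_snd measurable_fst)
  have hker : Measurable ({p : ℝ × ℝ | 0 < p.2 ∧ p.2 ≤ p.1}.indicator
      (fun p : ℝ × ℝ => Phi β c (p.1 - p.2) * ψ p.2)) :=
    (((phi_meas β c).comp (measurable_fst.sub measurable_snd)).mul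
      (hψ.comp measurable_snd)).indicator hset
  have heq : ∀ s : ℝ, ∫⁻ r in Ioc (0:ℝ) s, Phi β c (s - r) * ψ r
      = ∫⁻ r, ({p : ℝ × ℝ | 0 < p.2 ∧ p.2 ≤ p.1}.indicator
          (fun p : ℝ × ℝ => Phi β c (p.1 - p.2) * ψ p.2)) (s, r) := by
    intro s
    rw [← lintegral_indicator measurableSet_Ioc]
    refine lintegral_congr fun r => ?_
    simp only [indicator_apply, mem_Ioc, mem_setOf_eq]
  simp_rw [heq]
  exact hker.lintegral_prod_right'

lemma tonelli_bound {β c : ℝ} (T : ℝ) {ψ : ℝ → ℝ≥0∞} (hψ : Measurable ψ) :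
    ∫⁻ s in Ioc (0:ℝ) T, ∫⁻ r in Ioc (0:ℝ) s, Phi β c (s - r) * ψ r
      ≤ (∫⁻ t in Ici (0:ℝ), Phi β c t) * ∫⁻ r in Ioc (0:ℝ) T, ψ r := by
  set K := ∫⁻ t in Ici (0:ℝ), Phi β c t with hK
  set V : ℝ × ℝ → ℝ≥0∞ := fun p =>
    if 0 < p.2 ∧ p.2 ≤ p.1 ∧ p.1 ≤ T then Phi β c (p.1 - p.2) * ψ p.2 else 0 with hV
  have hVm : Measurable V := by
    have hset : MeasurableSet {p : ℝ × ℝ | 0 < p.2 ∧ p.2 ≤ p.1 ∧ p.1 ≤ T} := by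
      simp only [setOf_and]
      exact (measurableSet_lt measurable_const measurable_snd).inter
        ((measurableSet_le measurable_snd measurable_fst).inter
          (measurableSet_le measurable_fst measurable_const))
    exact Measurable.ite hset
      (((phi_meas β c).comp (measurable_fst.sub measurable_snd)).mul (hψ.comp measurable_snd))
      measurable_const
  have step1 : ∫⁻ s in Ioc (0:ℝ) T, ∫⁻ r in Ioc (0:ℝ) s, Phi β c (s - r) * ψ r
      ≤ ∫⁻ s : ℝ, ∫⁻ r : ℝ, V (s, r) := by
    have h1 : ∀ s ∈ Ioc (0:ℝ) T, (∫⁻ r in Ioc (0:ℝ) s, Phi β c (s - r) * ψ r)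
        = ∫⁻ r : ℝ, V (s, r) := by
      intro s hs
      rw [← lintegral_indicator measurableSet_Ioc]
      refine lintegral_congr fun r => ?_
      simp only [indicator_apply, mem_Ioc, hV]
      by_cases h : 0 < r ∧ r ≤ s
      · rw [if_pos h, if_pos ⟨h.1, h.2, hs.2⟩]
      · rw [if_neg h, if_neg fun hh => h ⟨hh.1, hh.2.1⟩]
    calc ∫⁻ s in Ioc (0:ℝ) T, ∫⁻ r in Ioc (0:ℝ) s, Phi β c (s - r) * ψ r
        = ∫⁻ s in Ioc (0:ℝ) T, ∫⁻ r : ℝ, V (s, r) :=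
          setLIntegral_congr_fun measurableSet_Ioc h1
      _ ≤ ∫⁻ s : ℝ, ∫⁻ r : ℝ, V (s, r) := setLIntegral_le_lintegral _ _
  have hswap : (∫⁻ s : ℝ, ∫⁻ r : ℝ, V (s, r)) = ∫⁻ r : ℝ, ∫⁻ s : ℝ, V (s, r) :=
    lintegral_lintegral_swap hVm.aemeasurable
  have step2 : (∫⁻ r : ℝ, ∫⁻ s : ℝ, V (s, r))
      ≤ ∫⁻ r in Ioc (0:ℝ) T, K * ψ r := by
    rw [← lintegral_indicator measurableSet_Ioc]
    refine lintegral_mono fun r => ?_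
    by_cases hr : r ∈ Ioc (0:ℝ) T
    · have h2 : ∀ s : ℝ, V (s, r) = (Icc r T).indicator (fun s => Phi β c (s - r) * ψ r) s := by
        intro s
        simp only [hV, indicator_apply, mem_Icc]
        by_cases h : r ≤ s ∧ s ≤ T
        · rw [if_pos ⟨hr.1, h.1, h.2⟩, if_pos h]
        · rw [if_neg fun hh => h ⟨hh.2.1, hh.2.2⟩, if_neg h]
      simp_rw [h2]
      rw [lintegral_indicator measurableSet_Icc, indicator_of_mem hr]
      have hm : Measurable fun s : ℝ => Phi β c (s - r) :=
        (phi_meas β c).comp (measurable_id.sub_const r)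
      rw [lintegral_mul_const _ hm]
      exact mul_le_mul_left (bound_sub_right β c r T) _
    · have h2 : ∀ s : ℝ, V (s, r) = 0 := by
        intro s
        simp only [hV]
        rw [if_neg]
        rintro ⟨h1, h2, h3⟩
        exact hr ⟨h1, h2.trans h3⟩
      simp [h2, indicator_of_notMem hr]
  calc ∫⁻ s in Ioc (0:ℝ) T, ∫⁻ r in Ioc (0:ℝ) s, Phi β c (s - r) * ψ r
      ≤ ∫⁻ r : ℝ, ∫⁻ s : ℝ, V (s, r) := hswap ▸ step1
    _ ≤ ∫⁻ r in Ioc (0:ℝ) T, K * ψ r := step2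
    _ = K * ∫⁻ r in Ioc (0:ℝ) T, ψ r := lintegral_const_mul K hψ

end WBCE

set_option maxHeartbeats 2000000 in
/-- Bilinear exponentially weighted estimate for the tempered power-law kernel:
`(∫₀^T e^{2αs} (Q_{β,δ}*f)(s) g(s) ds)² ≤ (Γ(1-β)²/[δ(δ-2α)]^{1-β})
(∫₀^T e^{2αs} f² ds)(∫₀^T e^{2αs} g² ds)`. -/
theorem weighted_bilinear_convolution_estimate
    (β δ α T : ℝ) (hβ0 : 0 ≤ β) (hβ1 : β < 1) (hδ : 0 < δ)
    (hα0 : 0 ≤ α) (hα : α < δ / 2) (hT : 0 < T)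
    (f g : ℝ → ℝ) (hf : Measurable f) (hg : Measurable g)
    (hf_nonneg : ∀ s ∈ Icc (0:ℝ) T, 0 ≤ f s)
    (hg_nonneg : ∀ s ∈ Icc (0:ℝ) T, 0 ≤ g s)
    (hf_int : IntegrableOn (fun s => Real.exp (2 * α * s) * f s ^ 2) (Ioc (0:ℝ) T))
    (hg_int : IntegrableOn (fun s => Real.exp (2 * α * s) * g s ^ 2) (Ioc (0:ℝ) T)) :
    (∫ s in Ioc (0:ℝ) T, Real.exp (2 * α * s) *
        (∫ r in Ioc (0:ℝ) s, (s - r) ^ (-β) * Real.exp (-δ * (s - r)) * f r) * g s) ^ 2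
      ≤ (Real.Gamma (1 - β)) ^ 2 / (δ * (δ - 2 * α)) ^ (1 - β) *
        ((∫ s in Ioc (0:ℝ) T, Real.exp (2 * α * s) * f s ^ 2) *
          (∫ s in Ioc (0:ℝ) T, Real.exp (2 * α * s) * g s ^ 2)) := by
  obtain ⟨c, hc_def⟩ : ∃ c : ℝ, c = δ - α := ⟨_, rfl⟩
  have hc : 0 < c := by rw [hc_def]; linarith
  have hβ' : 0 < 1 - β := by linarith
  set C0 : ℝ := (1/c) ^ (1-β) * Real.Gamma (1-β) with hC0_def
  have hC0 : 0 ≤ C0 :=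
    mul_nonneg (Real.rpow_nonneg (by positivity) _) (Real.Gamma_nonneg_of_nonneg hβ'.le)
  set K : ℝ≥0∞ := ∫⁻ t in Ici (0:ℝ), WBCE.Phi β c t with hK_def
  have hK : K = ENNReal.ofReal C0 := WBCE.K_eq hβ1 hc
  -- the functions
  set F : ℝ → ℝ≥0∞ := fun r => ENNReal.ofReal (Real.exp (α * r) * f r) with hF_def
  set G : ℝ → ℝ≥0∞ := fun s => ENNReal.ofReal (Real.exp (α * s) * g s) with hG_def
  have hFm : Measurable F := ((measurable_id.const_mul α).exp.mul hf).ennreal_ofReal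
  have hGm : Measurable G := ((measurable_id.const_mul α).exp.mul hg).ennreal_ofReal
  set I : ℝ → ℝ := fun s => ∫ r in Ioc (0:ℝ) s, (s - r) ^ (-β) * Real.exp (-δ * (s - r)) * f r
    with hI_def
  set A : ℝ := ∫ s in Ioc (0:ℝ) T, Real.exp (2 * α * s) * f s ^ 2 with hA_def
  set B : ℝ := ∫ s in Ioc (0:ℝ) T, Real.exp (2 * α * s) * g s ^ 2 with hB_def
  set L : ℝ := ∫ s in Ioc (0:ℝ) T, Real.exp (2 * α * s) * I s * g s with hL_def
  have hA0 : 0 ≤ A := setIntegral_nonneg measurableSet_Ioc fun s _ => by positivity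
  have hB0 : 0 ≤ B := setIntegral_nonneg measurableSet_Ioc fun s _ => by positivity
  -- nonnegativity of the inner integral
  have hI0 : ∀ s ∈ Ioc (0:ℝ) T, 0 ≤ I s := by
    intro s hs
    refine setIntegral_nonneg measurableSet_Ioc fun r hr => ?_
    have hfr : 0 ≤ f r := hf_nonneg r ⟨hr.1.le, hr.2.trans hs.2⟩
    have : (0:ℝ) ≤ (s - r) ^ (-β) := Real.rpow_nonneg (by linarith [hr.2]) _
    positivity
  have hL0 : 0 ≤ L := by
    refine setIntegral_nonneg measurableSet_Ioc fun s hs => ?_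
    have := hI0 s hs
    have hgs : 0 ≤ g s := hg_nonneg s ⟨hs.1.le, hs.2⟩
    positivity
  -- lintegral versions of A and B
  have hAeq : (∫⁻ s in Ioc (0:ℝ) T, (F s) ^ 2) = ENNReal.ofReal A := by
    have h1 : ∀ s ∈ Ioc (0:ℝ) T,
        (F s) ^ 2 = ENNReal.ofReal (Real.exp (2 * α * s) * f s ^ 2) := by
      intro s hs
      have hfs : 0 ≤ f s := hf_nonneg s ⟨hs.1.le, hs.2⟩
      rw [hF_def, ← ENNReal.ofReal_pow (by positivity)]
      congr 1
      rw [mul_pow, sq (Real.exp (α * s)), ← Real.exp_add]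
      ring_nf
    rw [setLIntegral_congr_fun measurableSet_Ioc h1,
      ← ofReal_integral_eq_lintegral_ofReal hf_int
        (Filter.Eventually.of_forall fun s => by positivity)]
  have hBeq : (∫⁻ s in Ioc (0:ℝ) T, (G s) ^ 2) = ENNReal.ofReal B := by
    have h1 : ∀ s ∈ Ioc (0:ℝ) T,
        (G s) ^ 2 = ENNReal.ofReal (Real.exp (2 * α * s) * g s ^ 2) := by
      intro s hs
      have hgs : 0 ≤ g s := hg_nonneg s ⟨hs.1.le, hs.2⟩
      rw [hG_def, ← ENNReal.ofReal_pow (by positivity)]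
      congr 1
      rw [mul_pow, sq (Real.exp (α * s)), ← Real.exp_add]
      ring_nf
    rw [setLIntegral_congr_fun measurableSet_Ioc h1,
      ← ofReal_integral_eq_lintegral_ofReal hg_int
        (Filter.Eventually.of_forall fun s => by positivity)]
  -- the ENNReal convolution
  set H : ℝ → ℝ≥0∞ := fun s => ∫⁻ r in Ioc (0:ℝ) s, WBCE.Phi β c (s - r) * F r with hH_def
  set J : ℝ → ℝ≥0∞ := fun s => ∫⁻ r in Ioc (0:ℝ) s, WBCE.Phi β c (s - r) * (F r) ^ 2
    with hJ_def
  have hHm : Measurable H := WBCE.meas_conv hFm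
  have hJm : Measurable J := WBCE.meas_conv (hFm.pow_const 2)
  -- Step 1 : ofReal L ≤ ∫⁻ G * H
  have step1 : ENNReal.ofReal L ≤ ∫⁻ s in Ioc (0:ℝ) T, G s * H s := by
    have hpt : ∀ s ∈ Ioc (0:ℝ) T,
        ENNReal.ofReal (Real.exp (2 * α * s) * I s * g s) ≤ G s * H s := by
      intro s hs
      have hgs : 0 ≤ g s := hg_nonneg s ⟨hs.1.le, hs.2⟩
      have e2 : Real.exp (2 * α * s) * I s * g s
          = (Real.exp (α * s) * g s) * (Real.exp (α * s) * I s) := by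
        rw [show Real.exp (2 * α * s) = Real.exp (α * s) * Real.exp (α * s) by
          rw [← Real.exp_add]; ring_nf]
        ring
      rw [e2, ENNReal.ofReal_mul (by positivity)]
      refine mul_le_mul_right ?_ (G s)
      -- show ofReal (exp (α s) * I s) ≤ H s
      by_cases hint : IntegrableOn
          (fun r => (s - r) ^ (-β) * Real.exp (-δ * (s - r)) * f r) (Ioc 0 s)
      · have hvint : IntegrableOn
            (fun r => Real.exp (α * s) * ((s - r) ^ (-β) * Real.exp (-δ * (s - r)) * f r))
            (Ioc 0 s) := hint.const_mul _
        have hIv : Real.exp (α * s) * I s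
            = ∫ r in Ioc (0:ℝ) s,
                Real.exp (α * s) * ((s - r) ^ (-β) * Real.exp (-δ * (s - r)) * f r) := by
          rw [hI_def, ← integral_const_mul]
        have hvnn : 0 ≤ᵐ[volume.restrict (Ioc (0:ℝ) s)]
            (fun r => Real.exp (α * s) * ((s - r) ^ (-β) * Real.exp (-δ * (s - r)) * f r)) := by
          refine (ae_restrict_iff' measurableSet_Ioc).2
            (Filter.Eventually.of_forall fun r hr => ?_)
          have hfr : 0 ≤ f r := hf_nonneg r ⟨hr.1.le, hr.2.trans hs.2⟩
          have : (0:ℝ) ≤ (s - r) ^ (-β) := Real.rpow_nonneg (by linarith [hr.2]) _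
          positivity
        rw [hIv, ofReal_integral_eq_lintegral_ofReal hvint hvnn]
        refine le_of_eq (setLIntegral_congr_fun measurableSet_Ioc
          (fun r hr => ?_))
        have hfr : 0 ≤ f r := hf_nonneg r ⟨hr.1.le, hr.2.trans hs.2⟩
        have hsr : (0:ℝ) ≤ s - r := by linarith [hr.2]
        have key : Real.exp (α * s) * ((s - r) ^ (-β) * Real.exp (-δ * (s - r)) * f r)
            = ((s - r) ^ (-β) * Real.exp (-c * (s - r))) * (Real.exp (α * r) * f r) := by
          rw [show Real.exp (α * s) = Real.exp (α * (s - r)) * Real.exp (α * r) by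
              rw [← Real.exp_add]; ring_nf,
            show Real.exp (-c * (s - r)) = Real.exp (-δ * (s - r)) * Real.exp (α * (s - r)) by
              rw [← Real.exp_add]; congr 1; rw [hc_def]; ring]
          ring
        rw [key, ENNReal.ofReal_mul (by positivity)]
        rfl
      · have : I s = 0 := integral_undef hint
        rw [this, mul_zero, ENNReal.ofReal_zero]
        exact zero_le
    by_cases hint : IntegrableOn (fun s => Real.exp (2 * α * s) * I s * g s) (Ioc (0:ℝ) T)
    · have hnn : 0 ≤ᵐ[volume.restrict (Ioc (0:ℝ) T)]
          (fun s => Real.exp (2 * α * s) * I s * g s) := by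
        refine (ae_restrict_iff' measurableSet_Ioc).2
          (Filter.Eventually.of_forall fun s hs => ?_)
        have := hI0 s hs
        have hgs : 0 ≤ g s := hg_nonneg s ⟨hs.1.le, hs.2⟩
        positivity
      rw [hL_def, ofReal_integral_eq_lintegral_ofReal hint hnn]
      exact lintegral_mono_ae ((ae_restrict_iff' measurableSet_Ioc).2
        (Filter.Eventually.of_forall hpt))
    · rw [hL_def, integral_undef hint]
      simp
  -- Step 2 : pointwise Cauchy–Schwarz : (H s)^2 ≤ K * J s
  have step2 : ∀ s : ℝ, (H s) ^ 2 ≤ K * J s := by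
    intro s
    have hphi : Measurable fun r : ℝ => WBCE.Phi β c (s - r) :=
      (WBCE.phi_meas β c).comp (measurable_const.sub measurable_id)
    have hcs := WBCE.lintegral_CS (volume.restrict (Ioc (0:ℝ) s))
      (F := fun r => (WBCE.Phi β c (s - r)) ^ (1/2 : ℝ))
      (G := fun r => (WBCE.Phi β c (s - r)) ^ (1/2 : ℝ) * F r)
      ((hphi.pow_const _).aemeasurable) (((hphi.pow_const _).mul hFm).aemeasurable)
    have hhalf : ∀ x : ℝ≥0∞, x ^ (1/2 : ℝ) * x ^ (1/2 : ℝ) = x := fun x => by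
      rw [← ENNReal.rpow_add_of_nonneg _ _ (by norm_num) (by norm_num)]
      norm_num
    have e1 : ∀ r : ℝ, (WBCE.Phi β c (s - r)) ^ (1/2 : ℝ)
        * ((WBCE.Phi β c (s - r)) ^ (1/2 : ℝ) * F r) = WBCE.Phi β c (s - r) * F r := by
      intro r; rw [← mul_assoc, hhalf]
    have e2 : ∀ r : ℝ, ((WBCE.Phi β c (s - r)) ^ (1/2 : ℝ)) ^ 2 = WBCE.Phi β c (s - r) := by
      intro r
      rw [sq, hhalf]
    have e3 : ∀ r : ℝ, ((WBCE.Phi β c (s - r)) ^ (1/2 : ℝ) * F r) ^ 2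
        = WBCE.Phi β c (s - r) * (F r) ^ 2 := by
      intro r
      rw [mul_pow, sq ((WBCE.Phi β c (s - r)) ^ (1/2 : ℝ)), hhalf]
    simp only [e1, e2, e3] at hcs
    refine hcs.trans ?_
    exact mul_le_mul_left (WBCE.bound_sub_left β c s) _
  -- Step 3 : putting it together
  have step3 : (ENNReal.ofReal L) ^ 2 ≤ ENNReal.ofReal B * (K * (K * ENNReal.ofReal A)) := by
    calc (ENNReal.ofReal L) ^ 2
        ≤ (∫⁻ s in Ioc (0:ℝ) T, G s * H s) ^ 2 := pow_le_pow_left' step1 2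
      _ ≤ (∫⁻ s in Ioc (0:ℝ) T, (G s) ^ 2) * (∫⁻ s in Ioc (0:ℝ) T, (H s) ^ 2) :=
          WBCE.lintegral_CS _ hGm.aemeasurable hHm.aemeasurable
      _ ≤ ENNReal.ofReal B * (K * (K * ENNReal.ofReal A)) := by
          rw [hBeq]
          refine mul_le_mul_right ?_ _
          calc (∫⁻ s in Ioc (0:ℝ) T, (H s) ^ 2)
              ≤ ∫⁻ s in Ioc (0:ℝ) T, K * J s :=
                lintegral_mono fun s => step2 s
            _ = K * ∫⁻ s in Ioc (0:ℝ) T, J s := lintegral_const_mul K hJm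
            _ ≤ K * (K * ENNReal.ofReal A) := by
                refine mul_le_mul_right ?_ K
                have := WBCE.tonelli_bound (β := β) (c := c) T (hFm.pow_const 2)
                rw [hAeq] at this
                exact this
  -- convert back to the reals
  have hreal : L ^ 2 ≤ B * (C0 * (C0 * A)) := by
    have h1 : (ENNReal.ofReal L) ^ 2 = ENNReal.ofReal (L ^ 2) :=
      (ENNReal.ofReal_pow hL0 2).symm
    have h2 : ENNReal.ofReal B * (K * (K * ENNReal.ofReal A))
        = ENNReal.ofReal (B * (C0 * (C0 * A))) := by
      rw [hK, ← ENNReal.ofReal_mul hC0, ← ENNReal.ofReal_mul hC0, ← ENNReal.ofReal_mul hB0]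
    rw [h1, h2] at step3
    exact (ENNReal.ofReal_le_ofReal_iff (by positivity)).1 step3
  -- compare constants
  have hcmp : C0 ^ 2 ≤ Real.Gamma (1 - β) ^ 2 / (δ * (δ - 2 * α)) ^ (1 - β) := by
    have hd2 : 0 < δ - 2 * α := by linarith
    have hpos : 0 < δ * (δ - 2 * α) := mul_pos hδ hd2
    have h1 : δ * (δ - 2 * α) ≤ c ^ 2 := by rw [hc_def]; nlinarith
    have h3 : (δ * (δ - 2 * α)) ^ (1 - β) ≤ (c ^ 2) ^ (1 - β) :=
      Real.rpow_le_rpow hpos.le h1 hβ'.le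
    have hc2 : ((1/c) ^ (1-β)) ^ 2 = 1 / (c ^ 2) ^ (1 - β) := by
      rw [sq, ← Real.mul_rpow (by positivity) (by positivity),
        show (1:ℝ)/c * (1/c) = 1 / c ^ 2 by ring,
        Real.div_rpow (by norm_num) (by positivity), Real.one_rpow]
    have hC0sq : C0 ^ 2 = Real.Gamma (1 - β) ^ 2 / (c ^ 2) ^ (1 - β) := by
      rw [hC0_def, mul_pow, hc2]
      ring
    rw [hC0sq]
    have hG2 : 0 ≤ Real.Gamma (1 - β) ^ 2 := sq_nonneg _
    have hpos2 : 0 < (δ * (δ - 2 * α)) ^ (1 - β) := Real.rpow_pos_of_pos hpos _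
    exact div_le_div_of_nonneg_left hG2 hpos2 h3
  calc L ^ 2 ≤ B * (C0 * (C0 * A)) := hreal
    _ = C0 ^ 2 * (A * B) := by ring
    _ ≤ Real.Gamma (1 - β) ^ 2 / (δ * (δ - 2 * α)) ^ (1 - β) * (A * B) :=
        mul_le_mul_of_nonneg_right hcmp (mul_nonneg hA0 hB0)
end

section
/- Let 0 ≤ β < 1, δ > 0 and 0 ≤ α < δ/2, and let T > 0. For every nonnegative measurable function f on [0,T], the exponentially weighted L² estimate for the convolution holds: ∫₀^T e^{2αt} ( (Q_{β,δ} * f)(t) )² dt ≤ (Γ(1-β)² / [δ(δ-2α)]^{1-β}) · ∫₀^T e^{2αs} f(s)² ds. -/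
open MeasureTheory Real Set

private lemma aux_tail_integral {β c : ℝ} (hβ : β < 1) (hc : 0 < c) :
    ∫⁻ u in Ioi (0:ℝ), ENNReal.ofReal (u ^ (-β) * Real.exp (-c * u)) =
      ENNReal.ofReal (Real.Gamma (1 - β) / c ^ (1 - β)) := by
  have hint : IntegrableOn (fun u : ℝ => u ^ (-β) * Real.exp (-c * u)) (Ioi 0) := by
    have h := integrableOn_rpow_mul_exp_neg_mul_rpow (s := -β) (p := 1) (b := c)
      (by linarith) zero_lt_one hc
    simpa using h
  have hnn : 0 ≤ᶠ[ae (volume.restrict (Ioi (0:ℝ)))]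
      fun u : ℝ => u ^ (-β) * Real.exp (-c * u) := by
    filter_upwards [ae_restrict_mem measurableSet_Ioi] with u hu
    exact mul_nonneg (Real.rpow_nonneg (le_of_lt hu) _) (Real.exp_nonneg _)
  rw [← MeasureTheory.ofReal_integral_eq_lintegral_ofReal hint hnn]
  congr 1
  have h2 := integral_rpow_mul_exp_neg_mul_Ioi (a := 1 - β) (r := c) (by linarith) hc
  have h3 : ∫ u in Ioi (0:ℝ), u ^ (-β) * Real.exp (-c * u)
      = (1/c) ^ (1-β) * Real.Gamma (1-β) := by
    rw [← h2]
    refine setIntegral_congr_fun measurableSet_Ioi fun u _ => ?_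
    rw [show (1:ℝ) - β - 1 = -β by ring, neg_mul]
  rw [h3, div_rpow zero_le_one hc.le, Real.one_rpow, one_div_mul_eq_div]

private lemma aux_subset_le {β c : ℝ} (hβ : β < 1) (hc : 0 < c) {A : Set ℝ}
    (hA : A ⊆ Ici 0) :
    ∫⁻ u in A, ENNReal.ofReal (u ^ (-β) * Real.exp (-c * u))
      ≤ ENNReal.ofReal (Real.Gamma (1 - β) / c ^ (1 - β)) := by
  calc ∫⁻ u in A, ENNReal.ofReal (u ^ (-β) * Real.exp (-c * u))
      ≤ ∫⁻ u in Ici (0:ℝ), ENNReal.ofReal (u ^ (-β) * Real.exp (-c * u)) :=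
        lintegral_mono_set hA
    _ = ∫⁻ u in Ioi (0:ℝ), ENNReal.ofReal (u ^ (-β) * Real.exp (-c * u)) :=
        (setLIntegral_congr Ioi_ae_eq_Ici).symm
    _ = _ := aux_tail_integral hβ hc

private lemma aux_shift_tail {β c : ℝ} (hβ : β < 1) (hc : 0 < c) (a : ℝ) {A : Set ℝ}
    (hA : A ⊆ Ici a) :
    ∫⁻ t in A, ENNReal.ofReal ((t - a) ^ (-β) * Real.exp (-c * (t - a)))
      ≤ ENNReal.ofReal (Real.Gamma (1 - β) / c ^ (1 - β)) := by
  calc ∫⁻ t in A, ENNReal.ofReal ((t - a) ^ (-β) * Real.exp (-c * (t - a)))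
      ≤ ∫⁻ t in Ici a, ENNReal.ofReal ((t - a) ^ (-β) * Real.exp (-c * (t - a))) :=
        lintegral_mono_set hA
    _ = ∫⁻ u in Ici (0:ℝ), ENNReal.ofReal (u ^ (-β) * Real.exp (-c * u)) := ?_
    _ ≤ _ := aux_subset_le hβ hc le_rfl
  have hmp := measurePreserving_add_right (volume : Measure ℝ) a
  have hemb : MeasurableEmbedding (fun u : ℝ => u + a) :=
    (Homeomorph.addRight a).measurableEmbedding
  have h := hmp.setLIntegral_comp_emb hemb
    (fun t => ENNReal.ofReal ((t - a) ^ (-β) * Real.exp (-c * (t - a)))) (Ici 0)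
  rw [show (fun u : ℝ => u + a) '' Ici 0 = Ici a by simp] at h
  rw [← h]
  exact (setLIntegral_congr_fun measurableSet_Ici
    (fun u _ => by rw [add_sub_cancel_right])).symm

private lemma aux_CS {β δ : ℝ} (hβ : β < 1) (hδ : 0 < δ) (f : ℝ → ℝ) (hf : Measurable f)
    (t : ℝ) (hfn : ∀ s ∈ Ioc (0:ℝ) t, 0 ≤ f s) :
    (∫⁻ s in Ioc (0:ℝ) t,
        ENNReal.ofReal ((t - s) ^ (-β) * Real.exp (-δ * (t - s))) * ENNReal.ofReal (f s)) ^ 2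
      ≤ ENNReal.ofReal (Real.Gamma (1 - β) / δ ^ (1 - β)) *
        ∫⁻ s in Ioc (0:ℝ) t,
          ENNReal.ofReal ((t - s) ^ (-β) * Real.exp (-δ * (t - s))) *
            ENNReal.ofReal (f s ^ 2) := by
  set Q : ℝ → ENNReal := fun u => ENNReal.ofReal (u ^ (-β) * Real.exp (-δ * u)) with hQ
  have hQm : Measurable fun s : ℝ => Q (t - s) := by
    apply Measurable.ennreal_ofReal
    fun_prop
  set F : ℝ → ENNReal := fun s => (Q (t - s)) ^ (1/2 : ℝ) with hF
  set G : ℝ → ENNReal := fun s => (Q (t - s)) ^ (1/2 : ℝ) * ENNReal.ofReal (f s) with hG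
  have hFm : Measurable F := hQm.pow_const _
  have hGm : Measurable G := (hQm.pow_const _).mul (hf.ennreal_ofReal)
  have hpq : Real.HolderConjugate 2 2 := Real.HolderConjugate.two_two
  have CS := ENNReal.lintegral_mul_le_Lp_mul_Lq (volume.restrict (Ioc (0:ℝ) t)) hpq
    hFm.aemeasurable hGm.aemeasurable
  have eFG : ∀ s : ℝ, (F * G) s = Q (t - s) * ENNReal.ofReal (f s) := by
    intro s
    show F s * G s = _
    rw [hF, hG]
    rw [← mul_assoc, ← ENNReal.rpow_add_of_nonneg _ _ (by norm_num) (by norm_num)]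
    norm_num
  have eF2 : ∀ s : ℝ, F s ^ (2:ℝ) = Q (t - s) := by
    intro s
    rw [hF, ← ENNReal.rpow_mul]
    norm_num
  have eG2 : ∀ s ∈ Ioc (0:ℝ) t, G s ^ (2:ℝ) = Q (t - s) * ENNReal.ofReal (f s ^ 2) := by
    intro s hs
    rw [hG, ENNReal.mul_rpow_of_nonneg _ _ (by norm_num), ← ENNReal.rpow_mul]
    norm_num
    rw [← ENNReal.ofReal_pow (hfn s hs)]
  have hL : ∫⁻ s in Ioc (0:ℝ) t, Q (t - s) * ENNReal.ofReal (f s)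
      = ∫⁻ s in Ioc (0:ℝ) t, (F * G) s :=
    lintegral_congr fun s => (eFG s).symm
  have hR1 : ∫⁻ s in Ioc (0:ℝ) t, F s ^ (2:ℝ) = ∫⁻ s in Ioc (0:ℝ) t, Q (t - s) :=
    lintegral_congr fun s => eF2 s
  have hR2 : ∫⁻ s in Ioc (0:ℝ) t, G s ^ (2:ℝ)
      = ∫⁻ s in Ioc (0:ℝ) t, Q (t - s) * ENNReal.ofReal (f s ^ 2) :=
    setLIntegral_congr_fun measurableSet_Ioc eG2
  have hQb : ∫⁻ s in Ioc (0:ℝ) t, Q (t - s)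
      ≤ ENNReal.ofReal (Real.Gamma (1 - β) / δ ^ (1 - β)) := by
    have hmp := Measure.measurePreserving_sub_left (volume : Measure ℝ) t
    have hemb : MeasurableEmbedding (fun s : ℝ => t - s) := by
      have := (Homeomorph.subLeft t).measurableEmbedding
      simpa using this
    have h := hmp.setLIntegral_comp_emb hemb (fun u => Q u) (Ioc 0 t)
    rw [h, Set.image_const_sub_Ioc, sub_self, sub_zero]
    exact aux_subset_le hβ hδ Ico_subset_Ici_self
  calc (∫⁻ s in Ioc (0:ℝ) t, Q (t - s) * ENNReal.ofReal (f s)) ^ 2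
      ≤ ((∫⁻ s in Ioc (0:ℝ) t, F s ^ (2:ℝ)) ^ (1/2 : ℝ) *
          (∫⁻ s in Ioc (0:ℝ) t, G s ^ (2:ℝ)) ^ (1/2 : ℝ)) ^ 2 := by
        rw [hL]
        exact pow_le_pow_left₀ zero_le CS 2
    _ = (∫⁻ s in Ioc (0:ℝ) t, F s ^ (2:ℝ)) * (∫⁻ s in Ioc (0:ℝ) t, G s ^ (2:ℝ)) := by
        rw [mul_pow, ← ENNReal.rpow_natCast (_ ^ (1/2:ℝ)) 2, ← ENNReal.rpow_mul,
          ← ENNReal.rpow_natCast (_ ^ (1/2:ℝ)) 2, ← ENNReal.rpow_mul]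
        norm_num
    _ = (∫⁻ s in Ioc (0:ℝ) t, Q (t - s)) *
        (∫⁻ s in Ioc (0:ℝ) t, Q (t - s) * ENNReal.ofReal (f s ^ 2)) := by rw [hR1, hR2]
    _ ≤ _ := mul_le_mul_left hQb _

private noncomputable def Gfun (β δ α : ℝ) (f : ℝ → ℝ) (t s : ℝ) : ENNReal :=
  ENNReal.ofReal (Real.exp (2 * α * t)) *
    (ENNReal.ofReal ((t - s) ^ (-β) * Real.exp (-δ * (t - s))) * ENNReal.ofReal (f s ^ 2))

private noncomputable def G2fun (β δ α : ℝ) (f : ℝ → ℝ) (t s : ℝ) : ENNReal :=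
  if s ≤ t then Gfun β δ α f t s else 0

/-- Exponentially weighted `L²` estimate for the tempered power-law convolution:
`∫₀^T e^{2αt} ((Q_{β,δ}*f)(t))² dt ≤ (Γ(1-β)²/[δ(δ-2α)]^{1-β}) ∫₀^T e^{2αs} f(s)² ds`,
stated for nonnegative measurable `f` using Lebesgue (`ℝ≥0∞`-valued) integrals. -/
theorem weighted_L2_convolution_estimate
    (β δ α T : ℝ) (hβ0 : 0 ≤ β) (hβ1 : β < 1) (hδ : 0 < δ)
    (hα0 : 0 ≤ α) (hα : α < δ / 2) (hT : 0 < T)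
    (f : ℝ → ℝ) (hf : Measurable f)
    (hf_nonneg : ∀ s ∈ Icc (0:ℝ) T, 0 ≤ f s) :
    ∫⁻ t in Ioc (0:ℝ) T, ENNReal.ofReal (Real.exp (2 * α * t)) *
        (∫⁻ s in Ioc (0:ℝ) t,
          ENNReal.ofReal ((t - s) ^ (-β) * Real.exp (-δ * (t - s))) *
            ENNReal.ofReal (f s)) ^ 2
      ≤ ENNReal.ofReal ((Real.Gamma (1 - β)) ^ 2 / (δ * (δ - 2 * α)) ^ (1 - β)) *
        ∫⁻ s in Ioc (0:ℝ) T,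
          ENNReal.ofReal (Real.exp (2 * α * s)) * ENNReal.ofReal (f s ^ 2) := by
  have hc₂ : 0 < δ - 2 * α := by linarith
  set C₁ : ENNReal := ENNReal.ofReal (Real.Gamma (1 - β) / δ ^ (1 - β)) with hC₁
  set C₂ : ENNReal := ENNReal.ofReal (Real.Gamma (1 - β) / (δ - 2 * α) ^ (1 - β)) with hC₂
  -- step 1 : pointwise Cauchy-Schwarz
  have step1 : ∀ t ∈ Ioc (0:ℝ) T,
      ENNReal.ofReal (Real.exp (2 * α * t)) *
        (∫⁻ s in Ioc (0:ℝ) t,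
          ENNReal.ofReal ((t - s) ^ (-β) * Real.exp (-δ * (t - s))) *
            ENNReal.ofReal (f s)) ^ 2
      ≤ ENNReal.ofReal (Real.exp (2 * α * t)) *
        (C₁ * ∫⁻ s in Ioc (0:ℝ) t,
          ENNReal.ofReal ((t - s) ^ (-β) * Real.exp (-δ * (t - s))) *
            ENNReal.ofReal (f s ^ 2)) := by
    intro t ht
    refine mul_le_mul_right ?_ _
    exact aux_CS hβ1 hδ f hf t (fun s hs => hf_nonneg s ⟨hs.1.le, hs.2.trans ht.2⟩)
  -- rewrite inner integrals over a fixed domain using G2fun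
  have hG2restr : ∀ t ∈ Ioc (0:ℝ) T,
      ∫⁻ s in Ioc (0:ℝ) t, Gfun β δ α f t s = ∫⁻ s in Ioc (0:ℝ) T, G2fun β δ α f t s := by
    intro t ht
    have h1 : ∫⁻ s in Ioc (0:ℝ) T, G2fun β δ α f t s
        = ∫⁻ s in Ioc (0:ℝ) T, (Iic t).indicator (fun s => Gfun β δ α f t s) s := by
      refine lintegral_congr fun s => ?_
      simp [G2fun, Set.indicator_apply]
    have hset : Iic t ∩ Ioc (0:ℝ) T = Ioc (0:ℝ) t := by
      ext x
      simp only [mem_inter_iff, mem_Iic, mem_Ioc]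
      constructor
      · rintro ⟨h1, h2, h3⟩; exact ⟨h2, h1⟩
      · rintro ⟨h1, h2⟩; exact ⟨h2, h1, h2.trans ht.2⟩
    rw [h1, lintegral_indicator measurableSet_Iic, Measure.restrict_restrict measurableSet_Iic,
      hset]
  -- measurability for Tonelli
  have hG2meas : Measurable (Function.uncurry (G2fun β δ α f)) := by
    have : Function.uncurry (G2fun β δ α f)
        = fun p : ℝ × ℝ => if p.2 ≤ p.1 then
            ENNReal.ofReal (Real.exp (2 * α * p.1)) *
              (ENNReal.ofReal ((p.1 - p.2) ^ (-β) * Real.exp (-δ * (p.1 - p.2))) *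
                ENNReal.ofReal (f p.2 ^ 2)) else 0 := by
      funext p; rfl
    rw [this]
    apply Measurable.ite (measurableSet_le measurable_snd measurable_fst)
    · apply Measurable.fun_mul
      · apply Measurable.ennreal_ofReal; fun_prop
      apply Measurable.fun_mul
      · apply Measurable.ennreal_ofReal; fun_prop
      · apply Measurable.ennreal_ofReal; fun_prop
    · exact measurable_const
  -- step 3 : bound for the swapped inner integral
  have step3 : ∀ s ∈ Ioc (0:ℝ) T,
      ∫⁻ t in Ioc (0:ℝ) T, G2fun β δ α f t s
        ≤ (ENNReal.ofReal (Real.exp (2 * α * s)) * ENNReal.ofReal (f s ^ 2)) * C₂ := by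
    intro s hs
    have h1 : ∫⁻ t in Ioc (0:ℝ) T, G2fun β δ α f t s
        = ∫⁻ t in Ioc (0:ℝ) T, (Ici s).indicator (fun t => Gfun β δ α f t s) t := by
      refine lintegral_congr fun t => ?_
      simp [G2fun, Set.indicator_apply]
    rw [h1, lintegral_indicator measurableSet_Ici, Measure.restrict_restrict measurableSet_Ici]
    have h2 : ∀ t ∈ Ici s ∩ Ioc (0:ℝ) T,
        Gfun β δ α f t s = (ENNReal.ofReal (Real.exp (2 * α * s)) * ENNReal.ofReal (f s ^ 2)) *
          ENNReal.ofReal ((t - s) ^ (-β) * Real.exp (-(δ - 2 * α) * (t - s))) := by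
      intro t _
      have h0 : Real.exp (2 * α * t) * ((t - s) ^ (-β) * Real.exp (-δ * (t - s)))
          = Real.exp (2 * α * s) * ((t - s) ^ (-β) * Real.exp (-(δ - 2 * α) * (t - s))) := by
        rw [show Real.exp (2 * α * t) = Real.exp (2 * α * s) * Real.exp ((2 * α) * (t - s)) by
          rw [← Real.exp_add]; congr 1; ring]
        rw [show Real.exp (-(δ - 2 * α) * (t - s))
            = Real.exp ((2 * α) * (t - s)) * Real.exp (-δ * (t - s)) by
          rw [← Real.exp_add]; congr 1; ring]
        ring
      calc Gfun β δ α f t s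
          = ENNReal.ofReal (Real.exp (2 * α * t) *
              ((t - s) ^ (-β) * Real.exp (-δ * (t - s)))) * ENNReal.ofReal (f s ^ 2) := by
            rw [Gfun, ← mul_assoc, ← ENNReal.ofReal_mul (Real.exp_nonneg _)]
        _ = (ENNReal.ofReal (Real.exp (2 * α * s)) * ENNReal.ofReal (f s ^ 2)) *
              ENNReal.ofReal ((t - s) ^ (-β) * Real.exp (-(δ - 2 * α) * (t - s))) := by
            rw [h0, ENNReal.ofReal_mul (Real.exp_nonneg _)]; ring
    rw [setLIntegral_congr_fun (measurableSet_Ici.inter measurableSet_Ioc) h2,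
      lintegral_const_mul' _ _ (by finiteness)]
    exact mul_le_mul_right (aux_shift_tail hβ1 hc₂ s inter_subset_left) _
  -- constant arithmetic
  have hconst : C₁ * C₂ =
      ENNReal.ofReal ((Real.Gamma (1 - β)) ^ 2 / (δ * (δ - 2 * α)) ^ (1 - β)) := by
    rw [hC₁, hC₂, ← ENNReal.ofReal_mul
      (div_nonneg (Real.Gamma_nonneg_of_nonneg (by linarith)) (Real.rpow_nonneg hδ.le _))]
    congr 1
    rw [div_mul_div_comm, ← pow_two, Real.mul_rpow hδ.le hc₂.le]
  -- assemble
  calc ∫⁻ t in Ioc (0:ℝ) T, ENNReal.ofReal (Real.exp (2 * α * t)) *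
        (∫⁻ s in Ioc (0:ℝ) t,
          ENNReal.ofReal ((t - s) ^ (-β) * Real.exp (-δ * (t - s))) *
            ENNReal.ofReal (f s)) ^ 2
      ≤ ∫⁻ t in Ioc (0:ℝ) T, ENNReal.ofReal (Real.exp (2 * α * t)) *
        (C₁ * ∫⁻ s in Ioc (0:ℝ) t,
          ENNReal.ofReal ((t - s) ^ (-β) * Real.exp (-δ * (t - s))) *
            ENNReal.ofReal (f s ^ 2)) := setLIntegral_mono' measurableSet_Ioc step1
    _ = C₁ * ∫⁻ t in Ioc (0:ℝ) T, ∫⁻ s in Ioc (0:ℝ) t, Gfun β δ α f t s := by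
        rw [← lintegral_const_mul' C₁ _ (by finiteness)]
        refine lintegral_congr fun t => ?_
        rw [mul_left_comm]
        congr 1
        rw [← lintegral_const_mul' _ _
          (by finiteness : ENNReal.ofReal (Real.exp (2 * α * t)) ≠ ⊤)]
        exact lintegral_congr fun s => by rw [Gfun]
    _ = C₁ * ∫⁻ t in Ioc (0:ℝ) T, ∫⁻ s in Ioc (0:ℝ) T, G2fun β δ α f t s := by
        congr 1
        exact setLIntegral_congr_fun measurableSet_Ioc hG2restr
    _ = C₁ * ∫⁻ s in Ioc (0:ℝ) T, ∫⁻ t in Ioc (0:ℝ) T, G2fun β δ α f t s := by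
        rw [lintegral_lintegral_swap hG2meas.aemeasurable]
    _ ≤ C₁ * ∫⁻ s in Ioc (0:ℝ) T,
        (ENNReal.ofReal (Real.exp (2 * α * s)) * ENNReal.ofReal (f s ^ 2)) * C₂ :=
        mul_le_mul_right (setLIntegral_mono' measurableSet_Ioc step3) _
    _ = (C₁ * C₂) * ∫⁻ s in Ioc (0:ℝ) T,
        ENNReal.ofReal (Real.exp (2 * α * s)) * ENNReal.ofReal (f s ^ 2) := by
        simp_rw [mul_comm _ C₂]
        rw [lintegral_const_mul' C₂ _ (by finiteness)]
        ring
    _ = _ := by rw [hconst]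
end
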